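/- Let ξ > 0, b > 0, t ∈ ℝ, and on the segment {(x, y) : y = ((t − b/2)/ξ)x + b/2, 0 ≤ x ≤ ξ} define C(x,y) = x²/(ξ√(x² + (y − b/2)²)) and the unit normal N = (b/2 − t, ξ)/√(ξ² + (b/2 − t)²). Then the spatial gradient of C extended by the same formula satisfies ∇C · N = 2(b/2 − t)/(ξ² + (t − b/2)²) at every point of the open segment. -/

import Mathlib

open Real

/-- The velocity field `C(x,y) = x² / (ξ √(x² + (y − b/2)²))` extended off the segment. -/
noncomputable def Cfield (ξ b : ℝ) (x y : ℝ) : ℝ :=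
  x^2 / (ξ * Real.sqrt (x^2 + (y - b/2)^2))

set_option maxHeartbeats 1000000 in
theorem grad_C_dot_N (ξ b t : ℝ) (hξ : 0 < ξ) (hb : 0 < b) :
    ∀ x : ℝ, 0 < x → x < ξ →
      ∀ y : ℝ, y = ((t - b/2) / ξ) * x + b/2 →
        deriv (fun x' : ℝ => Cfield ξ b x' y) x
            * ((b/2 - t) / Real.sqrt (ξ^2 + (b/2 - t)^2))
          + deriv (fun y' : ℝ => Cfield ξ b x y') y
            * (ξ / Real.sqrt (ξ^2 + (b/2 - t)^2))
        = 2 * (b/2 - t) / (ξ^2 + (t - b/2)^2) := by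
  intro x hx hxξ y hy
  set s := t - b/2 with hs
  set K := Real.sqrt (ξ^2 + s^2) with hK
  have hK2 : K^2 = ξ^2 + s^2 := Real.sq_sqrt (by positivity)
  have hKpos : 0 < K := Real.sqrt_pos.mpr (by positivity)
  have hu : y - b/2 = s * x / ξ := by rw [hy]; field_simp; ring
  have hr : x^2 + (y - b/2)^2 = (x * K / ξ)^2 := by
    rw [hu]; field_simp; nlinarith [hK2]
  have hXpos : 0 < x * K / ξ := by positivity
  have hsqrt : Real.sqrt (x^2 + (y - b/2)^2) = x * K / ξ := by
    rw [hr, Real.sqrt_sq hXpos.le]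
  have hrpos : 0 < x^2 + (y - b/2)^2 := by rw [hr]; positivity
  have hden : ξ * Real.sqrt (x^2 + (y - b/2)^2) ≠ 0 := by
    rw [hsqrt]; positivity
  -- x-derivative
  have h2x : HasDerivAt (fun x' : ℝ => x'^2) (2*x) x := by
    simpa using hasDerivAt_pow 2 x
  have hg1 : HasDerivAt (fun x' : ℝ => x'^2 + (y - b/2)^2) (2*x) x :=
    h2x.add_const _
  have hg2 : HasDerivAt (fun x' : ℝ => Real.sqrt (x'^2 + (y - b/2)^2))
      (2*x / (2 * Real.sqrt (x^2 + (y - b/2)^2))) x := hg1.sqrt hrpos.ne'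
  have hg3 : HasDerivAt (fun x' : ℝ => ξ * Real.sqrt (x'^2 + (y - b/2)^2))
      (ξ * (2*x / (2 * Real.sqrt (x^2 + (y - b/2)^2)))) x := hg2.const_mul ξ
  have hdx : HasDerivAt (fun x' : ℝ => Cfield ξ b x' y)
      ((2*x * (ξ * Real.sqrt (x^2 + (y - b/2)^2))
        - x^2 * (ξ * (2*x / (2 * Real.sqrt (x^2 + (y - b/2)^2)))))
        / (ξ * Real.sqrt (x^2 + (y - b/2)^2))^2) x := by
    exact h2x.div hg3 hden
  -- y-derivative
  have hy1 : HasDerivAt (fun y' : ℝ => (y' - b/2)^2) (2*(y - b/2)) y := by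
    simpa using ((hasDerivAt_id y).sub_const (b/2)).fun_pow 2
  have hy2 : HasDerivAt (fun y' : ℝ => x^2 + (y' - b/2)^2) (2*(y - b/2)) y :=
    hy1.const_add _
  have hy3 : HasDerivAt (fun y' : ℝ => Real.sqrt (x^2 + (y' - b/2)^2))
      (2*(y - b/2) / (2 * Real.sqrt (x^2 + (y - b/2)^2))) y := hy2.sqrt hrpos.ne'
  have hy4 : HasDerivAt (fun y' : ℝ => ξ * Real.sqrt (x^2 + (y' - b/2)^2))
      (ξ * (2*(y - b/2) / (2 * Real.sqrt (x^2 + (y - b/2)^2)))) y := hy3.const_mul ξ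
  have hdy : HasDerivAt (fun y' : ℝ => Cfield ξ b x y')
      ((0 * (ξ * Real.sqrt (x^2 + (y - b/2)^2))
        - x^2 * (ξ * (2*(y - b/2) / (2 * Real.sqrt (x^2 + (y - b/2)^2)))))
        / (ξ * Real.sqrt (x^2 + (y - b/2)^2))^2) y := by
    exact (hasDerivAt_const y ((x:ℝ)^2)).div hy4 hden
  rw [hdx.deriv, hdy.deriv, hsqrt, hu]
  have hsq2 : Real.sqrt (ξ^2 + (b/2 - t)^2) = K := by
    rw [hK]; congr 1; ring
  have hd2 : ξ^2 + (t - b/2)^2 = K^2 := by rw [hK2]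
  rw [hsq2, hd2]
  have hb2t : b/2 - t = -s := by rw [hs]; ring
  rw [hb2t]
  field_simp
  ring_nf
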